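/- Let γ ∈ [0,1), C ≥ 0, K ≥ 0, ε > 0 and E₀ > 0. Then there exists M₀ ≥ 0 such that: for all real numbers x, G, E with x > ε, G ≤ x, 0 < E ≤ E₀, and |G| ≤ K·(C + (x − G)^γ)·E^{1−γ}, one has G ≥ −M₀·x. -/

import Mathlib

open Real

lemma rpow_le_linear_aux (γ : ℝ) (hγ0 : 0 ≤ γ) (hγ1 : γ < 1) (δ : ℝ) (hδ : 0 < δ)
    (t : ℝ) (ht : 0 ≤ t) : t ^ γ ≤ δ * t + (1/δ) ^ (γ/(1-γ)) := by
  have h1γ : 0 < 1 - γ := by linarith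
  have hδ' : (0:ℝ) < 1/δ := by positivity
  set T : ℝ := (1/δ) ^ (1/(1-γ)) with hT
  have hTpos : 0 < T := rpow_pos_of_pos hδ' _
  have hc : (0:ℝ) ≤ (1/δ) ^ (γ/(1-γ)) := (rpow_pos_of_pos hδ' _).le
  rcases le_or_gt t T with h | h
  · have h2 : t ^ γ ≤ T ^ γ := rpow_le_rpow ht h hγ0
    have h3 : T ^ γ = (1/δ) ^ (γ/(1-γ)) := by
      rw [hT, ← rpow_mul hδ'.le]
      congr 1
      field_simp
    nlinarith [mul_nonneg hδ.le ht]
  · have htpos : 0 < t := hTpos.trans h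
    have h2 : t ^ γ = t ^ (γ - 1) * t := by
      rw [← rpow_add_one htpos.ne' (γ - 1)]
      ring_nf
    have h3 : t ^ (γ - 1) ≤ T ^ (γ - 1) :=
      rpow_le_rpow_of_nonpos hTpos h.le (by linarith)
    have h4 : T ^ (γ - 1) = δ := by
      rw [hT, ← rpow_mul hδ'.le]
      have : 1/(1-γ) * (γ - 1) = -1 := by field_simp; ring
      rw [this, rpow_neg_one, one_div, inv_inv]
    rw [h2]
    have := mul_le_mul_of_nonneg_right (h4 ▸ h3) htpos.le
    linarith

/-- Abstract form of Lemma 3.5: there is `M₀ ≥ 0` such that whenever `x > ε`, `G ≤ x`,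
`0 < E ≤ E₀` and `|G| ≤ K (C + (x-G)^γ) E^{1-γ}`, one has `G ≥ -M₀ x`. -/
theorem turnpike_uniform_lower_bound
    (γ C K ε E₀ : ℝ) (hγ0 : 0 ≤ γ) (hγ1 : γ < 1) (hC : 0 ≤ C) (hK : 0 ≤ K)
    (hε : 0 < ε) (hE₀ : 0 < E₀) :
    ∃ M₀ : ℝ, 0 ≤ M₀ ∧ ∀ x G E : ℝ, ε < x → G ≤ x → 0 < E → E ≤ E₀ →
      |G| ≤ K * (C + (x - G) ^ γ) * E ^ (1 - γ) → -M₀ * x ≤ G := by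
  have h1γ : 0 < 1 - γ := by linarith
  set A : ℝ := K * E₀ ^ (1 - γ) with hA
  have hApos : 0 ≤ A := by positivity
  set δ : ℝ := 1/(2*(A+1)) with hδdef
  have hδ : 0 < δ := by positivity
  set c : ℝ := (1/δ) ^ (γ/(1-γ)) with hc
  have hcpos : 0 ≤ c := (rpow_pos_of_pos (by positivity) _).le
  refine ⟨2*A*(C+c)/ε + 1, by positivity, fun x G E hx hGx hE hEE₀ hbound => ?_⟩
  have hxpos : 0 < x := hε.trans hx
  rcases le_or_gt 0 G with hG | hG
  · have : -(2*A*(C+c)/ε + 1) * x ≤ 0 := by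
      have : 0 ≤ (2*A*(C+c)/ε + 1) * x := by positivity
      linarith
    linarith
  · -- G < 0
    have hEpow : E ^ (1-γ) ≤ E₀ ^ (1-γ) := rpow_le_rpow hE.le hEE₀ h1γ.le
    have hxG : 0 ≤ x - G := by linarith
    have hpow0 : 0 ≤ (x - G) ^ γ := rpow_nonneg hxG _
    have hb1 : -G ≤ A * (C + (x - G) ^ γ) := by
      have h1 : |G| = -G := abs_of_neg hG
      have h2 : K * (C + (x - G) ^ γ) * E ^ (1-γ) ≤ K * (C + (x - G) ^ γ) * E₀ ^ (1-γ) := by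
        apply mul_le_mul_of_nonneg_left hEpow (by positivity)
      calc -G ≤ K * (C + (x - G) ^ γ) * E ^ (1-γ) := h1 ▸ hbound
        _ ≤ K * (C + (x - G) ^ γ) * E₀ ^ (1-γ) := h2
        _ = A * (C + (x - G) ^ γ) := by ring
    have hkey : (x - G) ^ γ ≤ δ * (x - G) + c :=
      rpow_le_linear_aux γ hγ0 hγ1 δ hδ (x - G) hxG
    have hb2 : -G ≤ A * C + A * (δ * (x - G) + c) := by nlinarith
    have hAδ : A * δ ≤ 1/2 := by
      rw [hδdef, mul_one_div, div_le_div_iff₀ (by positivity) (by norm_num)]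
      nlinarith
    -- A*δ*(x-G) ≤ (1/2)*(x-G)
    have hb3 : -G ≤ A*C + A*c + (1/2)*(x - G) := by nlinarith [mul_le_mul_of_nonneg_right hAδ hxG]
    -- so -G ≤ 2A(C+c) + x
    have hb4 : -G ≤ 2*A*(C+c) + x := by linarith
    have hεx : 2*A*(C+c) ≤ 2*A*(C+c)/ε * x := by
      rw [div_mul_eq_mul_div, le_div_iff₀ hε]
      nlinarith [mul_nonneg hApos (add_nonneg hC hcpos)]
    nlinarith
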